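/- Let H and H' be crossed homomorphisms from a 3-Lie algebra g to a 3-Lie algebra h with respect to an action ρ. Suppose ψ_g : g → g and ψ_h : h → h are 3-Lie algebra homomorphisms with ψ_g bijective, ψ_h ∘ H = H' ∘ ψ_g, and ψ_h(ρ(x,y)u) = ρ(ψ_g(x), ψ_g(y))(ψ_h(u)) for all x,y ∈ g, u ∈ h. For an n-cochain ω, define the n-cochain p(ω) by p(ω)(X_1,…,X_{n−1}, z) = ψ_h( ω((ψ_g^{−1}x_1, ψ_g^{−1}y_1),…,(ψ_g^{−1}x_{n−1}, ψ_g^{−1}y_{n−1}), ψ_g^{−1}z) ), where X_i = (x_i,y_i). Then for every n ≥ 1 and every n-cochain ω one has d_{ρ_{H'}}(p(ω)) = p(d_{ρ_H}(ω)); i.e., p is a cochain map from the complex of H to the complex of H'. -/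

import Mathlib

/-- A 3-Lie algebra over a field `K`: a `K`-vector space with a trilinear,
totally skew-symmetric bracket satisfying the fundamental identity. -/
structure ThreeLie (K V : Type*) [Field K] [AddCommGroup V] [Module K V] where
  br : V →ₗ[K] V →ₗ[K] V →ₗ[K] V
  skew₁₂ : ∀ x y z, br x y z = - br y x z
  skew₂₃ : ∀ x y z, br x y z = - br x z y
  fund : ∀ x₁ x₂ x₃ x₄ x₅,
    br x₁ x₂ (br x₃ x₄ x₅) =
      br (br x₁ x₂ x₃) x₄ x₅ + br x₃ (br x₁ x₂ x₄) x₅ + br x₃ x₄ (br x₁ x₂ x₅)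

/-- A representation of a 3-Lie algebra `(g, Lg)` on a vector space `V`. -/
structure ThreeLieRep (K g V : Type*) [Field K] [AddCommGroup g] [Module K g]
    [AddCommGroup V] [Module K V] (Lg : ThreeLie K g) where
  ρ : g →ₗ[K] g →ₗ[K] (V →ₗ[K] V)
  skew : ∀ x y, ρ x y = - ρ y x
  rep₁ : ∀ x₁ x₂ x₃ x₄,
    ρ x₁ x₂ ∘ₗ ρ x₃ x₄ =
      ρ (Lg.br x₁ x₂ x₃) x₄ + ρ x₃ (Lg.br x₁ x₂ x₄) + ρ x₃ x₄ ∘ₗ ρ x₁ x₂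
  rep₂ : ∀ x₁ x₂ x₃ x₄,
    ρ x₁ (Lg.br x₂ x₃ x₄) =
      ρ x₃ x₄ ∘ₗ ρ x₁ x₂ - ρ x₂ x₄ ∘ₗ ρ x₁ x₃ + ρ x₂ x₃ ∘ₗ ρ x₁ x₄

/-- An action of a 3-Lie algebra `(g, Lg)` on a 3-Lie algebra `(h, Lh)`:
a representation of `g` on `h` all of whose values are central in `h`
and which kills brackets of `h`. -/
structure ThreeLieAction (K g h : Type*) [Field K] [AddCommGroup g] [Module K g]
    [AddCommGroup h] [Module K h] (Lg : ThreeLie K g) (Lh : ThreeLie K h)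
    extends ThreeLieRep K g h Lg where
  central : ∀ x y u v w, Lh.br (ρ x y u) v w = 0
  annih : ∀ x y u v w, ρ x y (Lh.br u v w) = 0

/-- `H : g → h` is a crossed homomorphism with respect to the action `A`. -/
def IsCrossedHom {K g h : Type*} [Field K] [AddCommGroup g] [Module K g]
    [AddCommGroup h] [Module K h] {Lg : ThreeLie K g} {Lh : ThreeLie K h}
    (A : ThreeLieAction K g h Lg Lh) (H : g →ₗ[K] h) : Prop :=
  ∀ x y z, H (Lg.br x y z) =
    A.ρ x y (H z) + A.ρ y z (H x) + A.ρ z x (H y) + Lh.br (H x) (H y) (H z)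

section Cochains

variable {K g h : Type*} [Field K] [AddCommGroup g] [Module K g]
  [AddCommGroup h] [Module K h]

/-- A cochain of the 3-Lie algebra `g` with coefficients in `h` with `m` pairs of
`g`-arguments and one final `g`-argument (an `(m+1)`-cochain in the numbering of the
paper): it is linear in each of the `2m+1` vector arguments and antisymmetric under
swapping the two entries within each pair. -/
def IsCochain (K : Type*) [Field K] {g h : Type*} [AddCommGroup g] [Module K g]
    [AddCommGroup h] [Module K h] {m : ℕ}
    (f : (Fin m → g × g) → g → h) : Prop :=
  (∀ (X : Fin m → g × g) (i : Fin m) (x x' y : g) (z : g),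
      f (Function.update X i (x + x', y)) z =
        f (Function.update X i (x, y)) z + f (Function.update X i (x', y)) z) ∧
  (∀ (X : Fin m → g × g) (i : Fin m) (c : K) (x y : g) (z : g),
      f (Function.update X i (c • x, y)) z = c • f (Function.update X i (x, y)) z) ∧
  (∀ (X : Fin m → g × g) (i : Fin m) (x y y' : g) (z : g),
      f (Function.update X i (x, y + y')) z =
        f (Function.update X i (x, y)) z + f (Function.update X i (x, y')) z) ∧
  (∀ (X : Fin m → g × g) (i : Fin m) (c : K) (x y : g) (z : g),
      f (Function.update X i (x, c • y)) z = c • f (Function.update X i (x, y)) z) ∧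
  (∀ (X : Fin m → g × g) (z z' : g), f X (z + z') = f X z + f X z') ∧
  (∀ (X : Fin m → g × g) (c : K) (z : g), f X (c • z) = c • f X z) ∧
  (∀ (X : Fin m → g × g) (i : Fin m) (x y : g) (z : g),
      f (Function.update X i (x, y)) z = - f (Function.update X i (y, x)) z)

/-- The coboundary operator of the 3-Lie algebra `g` (with bracket `br`) with
coefficients given by the map `ρ' : g → g → h → h` (in our application,
`ρ' = ρ_H`), sending a cochain with `m` pairs to a cochain with `m + 1` pairs. -/
def coboundary {m : ℕ} (br : g → g → g → g) (ρ' : g → g → h → h)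
    (f : (Fin m → g × g) → g → h) : (Fin (m + 1) → g × g) → g → h := fun X z =>
  (∑ j : Fin (m + 1), ∑ k : Fin (m + 1),
      if j < k then
        (-1 : ℤ) ^ (j.val + 1) •
          (f ((Function.update X k (br (X j).1 (X j).2 (X k).1, (X k).2)) ∘ j.succAbove) z
           + f ((Function.update X k ((X k).1, br (X j).1 (X j).2 (X k).2)) ∘ j.succAbove) z)
      else 0)
  + ∑ j : Fin (m + 1), (-1 : ℤ) ^ (j.val + 1) • f (X ∘ j.succAbove) (br (X j).1 (X j).2 z)
  + ∑ j : Fin (m + 1), (-1 : ℤ) ^ j.val • ρ' (X j).1 (X j).2 (f (X ∘ j.succAbove) z)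
  + (-1 : ℤ) ^ m •
      (ρ' (X (Fin.last m)).2 z (f (X ∘ (Fin.last m).succAbove) (X (Fin.last m)).1)
       + ρ' z (X (Fin.last m)).1 (f (X ∘ (Fin.last m).succAbove) (X (Fin.last m)).2))

end Cochains

/-- Let `H, H'` be crossed homomorphisms from `g` to `h` with
respect to an action `A`, and let `(ψg, ψh)` be a homomorphism from `H` to `H'`
with `ψg` bijective.  Then the map `p` sending a cochain `ω` to
`p(ω)(X₁,…,Xₘ,z) = ψh (ω(ψg⁻¹X₁,…,ψg⁻¹Xₘ, ψg⁻¹z))` is a cochain map from the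
complex of `H` (with coboundary `d_{ρ_H}`) to the complex of `H'` (with
coboundary `d_{ρ_{H'}}`). -/
theorem crossedHom_cochain_map
    (K g h : Type*) [Field K] [CharZero K] [AddCommGroup g] [Module K g]
    [AddCommGroup h] [Module K h] (Lg : ThreeLie K g) (Lh : ThreeLie K h)
    (A : ThreeLieAction K g h Lg Lh) (H H' : g →ₗ[K] h)
    (hH : IsCrossedHom A H) (hH' : IsCrossedHom A H')
    (ψg : g ≃ₗ[K] g) (ψh : h →ₗ[K] h)
    (hψg : ∀ x y z, ψg (Lg.br x y z) = Lg.br (ψg x) (ψg y) (ψg z))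
    (hψh : ∀ u v w, ψh (Lh.br u v w) = Lh.br (ψh u) (ψh v) (ψh w))
    (hcomm : ∀ x, ψh (H x) = H' (ψg x))
    (hcompat : ∀ x y u, ψh (A.ρ x y u) = A.ρ (ψg x) (ψg y) (ψh u))
    (m : ℕ) (ω : (Fin m → g × g) → g → h) (hω : IsCochain K ω) :
    coboundary (fun x y z => Lg.br x y z)
        (fun x y u => A.ρ x y u + Lh.br (H' x) (H' y) u)
        (fun X z => ψh (ω (fun i => (ψg.symm (X i).1, ψg.symm (X i).2)) (ψg.symm z)))
      = fun X z =>
          ψh (coboundary (fun x y z => Lg.br x y z)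
                (fun x y u => A.ρ x y u + Lh.br (H x) (H y) u) ω
              (fun i => (ψg.symm (X i).1, ψg.symm (X i).2)) (ψg.symm z)) := by

  have hsymm : ∀ x y z, ψg.symm (Lg.br x y z)
      = Lg.br (ψg.symm x) (ψg.symm y) (ψg.symm z) := by
    intro x y z
    apply ψg.injective
    rw [ψg.apply_symm_apply, hψg, ψg.apply_symm_apply, ψg.apply_symm_apply,
      ψg.apply_symm_apply]
  have hρ : ∀ x y u, ψh (A.ρ x y u + Lh.br (H x) (H y) u)
      = A.ρ (ψg x) (ψg y) (ψh u) + Lh.br (H' (ψg x)) (H' (ψg y)) (ψh u) := by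
    intro x y u
    rw [map_add, hcompat, hψh, hcomm, hcomm]
  funext X z
  set Y : Fin (m + 1) → g × g := fun i => (ψg.symm (X i).1, ψg.symm (X i).2) with hY
  have hupd : ∀ (k : Fin (m + 1)) (v : g × g),
      (fun i => (ψg.symm ((Function.update X k v) i).1,
                 ψg.symm ((Function.update X k v) i).2))
        = Function.update Y k (ψg.symm v.1, ψg.symm v.2) := by
    intro k v
    funext i
    by_cases hik : i = k
    · subst hik; simp
    · simp [Function.update_of_ne hik, hY]
  unfold coboundary
  simp only [map_add, map_sum, map_zsmul, apply_ite ψh, map_zero]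
  have e1 : ∀ j k : Fin (m + 1),
      (fun i => (ψg.symm ((Function.update X k
            (Lg.br (X j).1 (X j).2 (X k).1, (X k).2) ∘ j.succAbove) i).1,
          ψg.symm ((Function.update X k
            (Lg.br (X j).1 (X j).2 (X k).1, (X k).2) ∘ j.succAbove) i).2))
      = Function.update Y k (Lg.br (Y j).1 (Y j).2 (Y k).1, (Y k).2) ∘ j.succAbove := by
    intro j k
    have := hupd k (Lg.br (X j).1 (X j).2 (X k).1, (X k).2)
    funext i
    have h2 := congrFun this (j.succAbove i)
    simp only [Function.comp_apply]
    rw [h2]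
    simp [hsymm, hY]
  have e2 : ∀ j k : Fin (m + 1),
      (fun i => (ψg.symm ((Function.update X k
            ((X k).1, Lg.br (X j).1 (X j).2 (X k).2) ∘ j.succAbove) i).1,
          ψg.symm ((Function.update X k
            ((X k).1, Lg.br (X j).1 (X j).2 (X k).2) ∘ j.succAbove) i).2))
      = Function.update Y k ((Y k).1, Lg.br (Y j).1 (Y j).2 (Y k).2) ∘ j.succAbove := by
    intro j k
    have := hupd k ((X k).1, Lg.br (X j).1 (X j).2 (X k).2)
    funext i
    have h2 := congrFun this (j.succAbove i)
    simp only [Function.comp_apply]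
    rw [h2]
    simp [hsymm, hY]
  have e3 : ∀ j : Fin (m + 1),
      (fun i => (ψg.symm ((X ∘ j.succAbove) i).1, ψg.symm ((X ∘ j.succAbove) i).2))
        = Y ∘ j.succAbove := fun _ => rfl
  congr 1
  congr 1
  congr 1
  · refine Finset.sum_congr rfl fun j _ => Finset.sum_congr rfl fun k _ => ?_
    by_cases hjk : j < k
    · simp only [if_pos hjk, map_add, map_zsmul, e1 j k, e2 j k]
    · simp [if_neg hjk]
  · refine Finset.sum_congr rfl fun j _ => ?_
    rw [e3 j, hsymm]
  · refine Finset.sum_congr rfl fun j _ => ?_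
    rw [e3 j]
    simp [hY, hcompat, hψh, hcomm]
  · rw [e3 (Fin.last m)]
    simp [hY, hcompat, hψh, hcomm]
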